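/- The max energy gap equals the minimum energy-not-served: for any reference P^r and fleet with capacity curve Ω, define Φ = sup_{p≥0} max{E_{P^r}(p) − Ω(p), 0}. Then the minimum over feasible output signals g (those with g ≤ P^r pointwise and E_g(p) ≤ Ω(p) for all p) of Γ(g, P^r) equals Φ, and the minimum is attained by the capped signal P̄^r(t) = min{P^r(t), p̃} where p̃ satisfies E_{P^r}(p̃) = Φ. -/
import Mathlib


open MeasureTheory Set

private lemma int_max_aux (f : ℝ → ℝ) (hf : Measurable f) (h0 : ∀ t, 0 ≤ f t)
    (hint : IntegrableOn f (Set.Ioi 0)) (p : ℝ) (hp : 0 ≤ p) :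
    IntegrableOn (fun t => max (f t - p) 0) (Set.Ioi 0) := by
  refine Integrable.mono hint
    ((hf.sub_const p).max measurable_const).aestronglyMeasurable ?_
  filter_upwards with t
  rw [Real.norm_eq_abs, Real.norm_eq_abs,
    abs_of_nonneg (le_max_right _ _), abs_of_nonneg (h0 t)]
  exact max_le (by linarith [h0 t]) (h0 t)

/-- The max energy gap equals the minimum energy-not-served: with
`Φ = sup_{p ≥ 0} max {E_{Pʳ}(p) − Ω(p), 0}` and a cap level `p̃ ≥ 0` with
`E_{Pʳ}(p̃) = Φ`, the capped signal `P̄ʳ = min (Pʳ ·) p̃` is feasible, its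
energy-not-served equals `Φ`, and every feasible output `g` (i.e. `g ≤ Pʳ`
pointwise with `E_g` dominated by the capacity curve `Ω`) incurs
energy-not-served at least `Φ`. -/
theorem max_energy_gap_eq_min_ens (Pr Ω : ℝ → ℝ)
    (hPmeas : Measurable Pr) (hPnonneg : ∀ t, 0 ≤ Pr t)
    (hPint : IntegrableOn Pr (Set.Ioi 0))
    (hΩnonneg : ∀ p, 0 ≤ p → 0 ≤ Ω p)
    (hΩconv : ConvexOn ℝ (Set.Ici (0 : ℝ)) Ω)
    (hΩanti : AntitoneOn Ω (Set.Ici (0 : ℝ)))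
    (Φ : ℝ)
    (hΦ : IsLUB {e : ℝ | ∃ p : ℝ, 0 ≤ p ∧
      e = max ((∫ t in Set.Ioi (0 : ℝ), max (Pr t - p) 0) - Ω p) 0} Φ)
    (ptilde : ℝ) (hpt : 0 ≤ ptilde)
    (hcap : (∫ t in Set.Ioi (0 : ℝ), max (Pr t - ptilde) 0) = Φ) :
    ((∀ t, min (Pr t) ptilde ≤ Pr t) ∧
      ∀ p : ℝ, 0 ≤ p →
        (∫ t in Set.Ioi (0 : ℝ), max (min (Pr t) ptilde - p) 0) ≤ Ω p) ∧
    (∫ t in Set.Ioi (0 : ℝ), max (Pr t - min (Pr t) ptilde) 0) = Φ ∧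
    (∀ g : ℝ → ℝ, Measurable g → (∀ t, 0 ≤ g t) → (∀ t, g t ≤ Pr t) →
      IntegrableOn g (Set.Ioi 0) →
      (∀ p : ℝ, 0 ≤ p → (∫ t in Set.Ioi (0 : ℝ), max (g t - p) 0) ≤ Ω p) →
      Φ ≤ ∫ t in Set.Ioi (0 : ℝ), max (Pr t - g t) 0) := by
  have hub : ∀ p : ℝ, 0 ≤ p →
      (∫ t in Set.Ioi (0 : ℝ), max (Pr t - p) 0) - Ω p ≤ Φ := by
    intro p hp
    have := hΦ.1 ⟨p, hp, rfl⟩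
    exact le_trans (le_max_left _ _) this
  refine ⟨⟨fun t => min_le_left _ _, ?_⟩, ?_, ?_⟩
  · -- feasibility of the capped signal
    intro p hp
    rcases le_total ptilde p with hle | hlt
    · have h0 : (∫ t in Set.Ioi (0 : ℝ), max (min (Pr t) ptilde - p) 0) = 0 := by
        have : ∀ t, max (min (Pr t) ptilde - p) 0 = 0 := by
          intro t
          have : min (Pr t) ptilde ≤ p := le_trans (min_le_right _ _) hle
          simp [max_eq_right, sub_nonpos.2 this]
        simp [this]
      rw [h0]; exact hΩnonneg p hp
    · have hkey : ∀ t, max (min (Pr t) ptilde - p) 0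
          = max (Pr t - p) 0 - max (Pr t - ptilde) 0 := by
        intro t
        simp only [max_def, min_def]
        split_ifs <;> linarith
      have heq : (∫ t in Set.Ioi (0 : ℝ), max (min (Pr t) ptilde - p) 0)
          = (∫ t in Set.Ioi (0 : ℝ), max (Pr t - p) 0)
            - ∫ t in Set.Ioi (0 : ℝ), max (Pr t - ptilde) 0 := by
        rw [← integral_sub (int_max_aux Pr hPmeas hPnonneg hPint p hp)
          (int_max_aux Pr hPmeas hPnonneg hPint ptilde hpt)]
        exact integral_congr_ae (Filter.Eventually.of_forall fun t => hkey t)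
      rw [heq, hcap]
      have := hub p hp
      linarith
  · -- ENS of the capped signal equals Φ
    have hkey : ∀ t, max (Pr t - min (Pr t) ptilde) 0 = max (Pr t - ptilde) 0 := by
      intro t
      simp only [max_def, min_def]
      split_ifs <;> linarith
    calc (∫ t in Set.Ioi (0 : ℝ), max (Pr t - min (Pr t) ptilde) 0)
        = ∫ t in Set.Ioi (0 : ℝ), max (Pr t - ptilde) 0 :=
          integral_congr_ae (Filter.Eventually.of_forall fun t => hkey t)
      _ = Φ := hcap
  · -- lower bound for every feasible g
    intro g hgm hg0 hgP hgint hgΩ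
    have hintdiff : IntegrableOn (fun t => max (Pr t - g t) 0) (Set.Ioi 0) := by
      refine (hPint.sub hgint).congr ?_
      exact Filter.Eventually.of_forall fun t =>
        (max_eq_left (sub_nonneg.2 (hgP t))).symm
    have hI0 : 0 ≤ ∫ t in Set.Ioi (0 : ℝ), max (Pr t - g t) 0 :=
      integral_nonneg fun t => le_max_right _ _
    refine hΦ.2 ?_
    rintro e ⟨p, hp, rfl⟩
    refine max_le ?_ hI0
    have hEg := hgΩ p hp
    have hmono : (∫ t in Set.Ioi (0 : ℝ), max (Pr t - p) 0)
        - (∫ t in Set.Ioi (0 : ℝ), max (g t - p) 0)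
        ≤ ∫ t in Set.Ioi (0 : ℝ), max (Pr t - g t) 0 := by
      rw [← integral_sub (int_max_aux Pr hPmeas hPnonneg hPint p hp)
        (int_max_aux g hgm hg0 hgint p hp)]
      refine integral_mono ((int_max_aux Pr hPmeas hPnonneg hPint p hp).sub
        (int_max_aux g hgm hg0 hgint p hp)) hintdiff ?_
      intro t
      have h1 := hgP t
      have h2 := hg0 t
      simp only [Pi.sub_apply, max_def]
      split_ifs <;> simp <;> linarith
    linarith
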